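/- Let n ≥ 1 and N = 2^n. Define the Heisenberg–Weyl (Pauli) group HW_N = { i^κ · E(a,b) : κ ∈ {0,1,2,3}, a, b ∈ F₂ⁿ } and the Clifford group Cliff_N = { g ∈ U(N) : g M g† ∈ HW_N for every M ∈ HW_N }, where U(N) is the group of N × N unitary complex matrices. Then for every g ∈ Cliff_N there exists a binary symplectic matrix F ∈ Sp(2n, F₂) such that for all a, b ∈ F₂ⁿ there exists ε ∈ {+1, −1} with g E(a,b) g† = ε E(c,d), where the row vector [c,d] ∈ F₂^{2n} is given by [c,d] = [a,b] F. -/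

import Mathlib

open Matrix

noncomputable section

/-- The Hermitian Pauli matrix `E(a,b)` on `n` qubits, with rows and columns
indexed by binary vectors. -/
def PauliE {n : ℕ} (a b : Fin n → ZMod 2) :
    Matrix (Fin n → ZMod 2) (Fin n → ZMod 2) ℂ :=
  Matrix.of fun u v =>
    Complex.I ^ ((∑ i, (a i).val * (b i).val) % 4) *
      (-1 : ℂ) ^ (∑ i, (v i).val * (b i).val) *
      (if u = v + a then (1 : ℂ) else 0)

/-- The symplectic form `Ω = [[0, I],[I, 0]]` over `F₂`. -/
def OmegaMat (n : ℕ) : Matrix (Fin n ⊕ Fin n) (Fin n ⊕ Fin n) (ZMod 2) :=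
  Matrix.fromBlocks 0 1 1 0

namespace CliffordAux
variable {n : ℕ}

variable {n : ℕ}

def sdot (a b : Fin n → ZMod 2) : ℕ := ∑ i, (a i).val * (b i).val

lemma I_pow_mod (m : ℕ) : Complex.I ^ (m % 4) = Complex.I ^ m := by
  conv_rhs => rw [← Nat.div_add_mod m 4, pow_add, pow_mul, Complex.I_pow_four, one_pow, one_mul]

lemma PauliE_apply (a b u v : Fin n → ZMod 2) :
    PauliE a b u v = Complex.I ^ sdot a b * (-1 : ℂ) ^ sdot v b *
      (if u = v + a then (1 : ℂ) else 0) := by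
  rw [PauliE, Matrix.of_apply, I_pow_mod]; rfl

lemma sdot_comm (a b : Fin n → ZMod 2) : sdot a b = sdot b a := by
  unfold sdot; exact Finset.sum_congr rfl fun i _ => Nat.mul_comm _ _

lemma sdot_add_mod (a c b : Fin n → ZMod 2) :
    sdot (a + c) b % 2 = (sdot a b + sdot c b) % 2 := by
  have key : ∀ i : Fin n, ((a + c) i).val * (b i).val % 2
      = ((a i).val * (b i).val + (c i).val * (b i).val) % 2 := by
    intro i
    have h : ((a + c) i).val = ((a i).val + (c i).val) % 2 := ZMod.val_add _ _
    rw [h, Nat.mod_mul_mod, add_mul]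
  calc sdot (a + c) b % 2
      = (∑ i, ((a + c) i).val * (b i).val % 2) % 2 := Finset.sum_nat_mod _ _ _
    _ = (∑ i, ((a i).val * (b i).val + (c i).val * (b i).val) % 2) % 2 := by
        rw [Finset.sum_congr rfl fun i _ => key i]
    _ = (∑ i, ((a i).val * (b i).val + (c i).val * (b i).val)) % 2 :=
        (Finset.sum_nat_mod _ _ _).symm
    _ = (sdot a b + sdot c b) % 2 := by rw [Finset.sum_add_distrib]; rfl

lemma neg_one_pow_sdot_add (a c b : Fin n → ZMod 2) :
    ((-1 : ℂ)) ^ sdot (a + c) b = (-1 : ℂ) ^ sdot a b * (-1 : ℂ) ^ sdot c b := by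
  rw [← pow_add, neg_one_pow_eq_pow_mod_two, sdot_add_mod, ← neg_one_pow_eq_pow_mod_two]


lemma PauliE_mul (a b c d : Fin n → ZMod 2) :
    PauliE a b * PauliE c d =
      (Complex.I ^ sdot a b * Complex.I ^ sdot c d * (-1 : ℂ) ^ sdot c b *
        (Complex.I ^ sdot (a + c) (b + d))⁻¹) • PauliE (a + c) (b + d) := by
  ext u w
  rw [Matrix.mul_apply]
  simp only [PauliE_apply, Matrix.smul_apply, smul_eq_mul]
  have hstep : ∀ v : Fin n → ZMod 2,
      (Complex.I ^ sdot a b * (-1 : ℂ) ^ sdot v b * (if u = v + a then (1:ℂ) else 0)) *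
        (Complex.I ^ sdot c d * (-1 : ℂ) ^ sdot w d * (if v = w + c then (1:ℂ) else 0)) =
      (if v = w + c then
        (Complex.I ^ sdot a b * (-1 : ℂ) ^ sdot (w + c) b * (if u = w + c + a then (1:ℂ) else 0)) *
          (Complex.I ^ sdot c d * (-1 : ℂ) ^ sdot w d) else 0) := by
    intro v
    by_cases hv : v = w + c
    · subst hv; simp
    · simp [hv]
  rw [Finset.sum_congr rfl fun v _ => hstep v, Finset.sum_ite_eq' Finset.univ (w + c)
    (fun _ => (Complex.I ^ sdot a b * (-1 : ℂ) ^ sdot (w + c) b *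
      (if u = w + c + a then (1:ℂ) else 0)) * (Complex.I ^ sdot c d * (-1 : ℂ) ^ sdot w d))]
  simp only [Finset.mem_univ, if_true]
  have hcond : (u = w + c + a) ↔ (u = w + (a + c)) := by
    rw [add_assoc, add_comm c a]
  have h1 : ((-1 : ℂ)) ^ sdot (w + c) b = (-1 : ℂ) ^ sdot w b * (-1 : ℂ) ^ sdot c b :=
    neg_one_pow_sdot_add w c b
  have h2 : ((-1 : ℂ)) ^ sdot w (b + d) = (-1 : ℂ) ^ sdot w b * (-1 : ℂ) ^ sdot w d := by
    rw [sdot_comm w (b + d), neg_one_pow_sdot_add, sdot_comm b w, sdot_comm d w]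
  have hinv : (Complex.I ^ sdot (a + c) (b + d))⁻¹ * Complex.I ^ sdot (a + c) (b + d) = 1 :=
    inv_mul_cancel₀ (pow_ne_zero _ Complex.I_ne_zero)
  simp only [hcond, h1, h2]
  split_ifs with h
  · linear_combination (-(Complex.I ^ sdot a b * Complex.I ^ sdot c d * (-1:ℂ) ^ sdot c b *
      (-1:ℂ) ^ sdot w b * (-1:ℂ) ^ sdot w d)) * hinv
  · ring


lemma PauliE_comm (a b c d : Fin n → ZMod 2) :
    PauliE a b * PauliE c d =
      ((-1 : ℂ) ^ (sdot c b + sdot a d)) • (PauliE c d * PauliE a b) := by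
  rw [PauliE_mul a b c d, PauliE_mul c d a b, smul_smul, add_comm c a, add_comm d b]
  congr 1
  have h : (-1 : ℂ) ^ sdot a d * (-1 : ℂ) ^ sdot a d = 1 := by
    rw [← pow_add]; exact Even.neg_one_pow ⟨sdot a d, rfl⟩
  rw [pow_add]
  linear_combination (-(Complex.I ^ sdot a b * Complex.I ^ sdot c d * (-1:ℂ) ^ sdot c b *
    (Complex.I ^ sdot (a + c) (b + d))⁻¹)) * h

lemma add_self_zero (a : Fin n → ZMod 2) : a + a = 0 := by
  funext i; exact CharTwo.add_self_eq_zero _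

lemma eq_add_comm_iff (u v a : Fin n → ZMod 2) : u = v + a ↔ v = u + a := by
  constructor <;> rintro rfl <;> rw [add_assoc, add_self_zero, add_zero]

lemma PauliE_isHermitian (a b : Fin n → ZMod 2) : (PauliE a b)ᴴ = PauliE a b := by
  ext u v
  rw [Matrix.conjTranspose_apply, PauliE_apply, PauliE_apply]
  by_cases h : u = v + a
  · rw [if_pos h, if_pos ((eq_add_comm_iff u v a).mp h)]
    subst h
    have hsu : ((-1 : ℂ)) ^ sdot (v + a) b = (-1 : ℂ) ^ sdot v b * (-1 : ℂ) ^ sdot a b :=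
      neg_one_pow_sdot_add v a b
    have hstar : star (Complex.I ^ sdot a b) = (-1 : ℂ) ^ sdot a b * Complex.I ^ sdot a b := by
      rw [star_pow, Complex.star_def, Complex.conj_I, neg_pow]
    have hsq : (-1 : ℂ) ^ sdot a b * (-1 : ℂ) ^ sdot a b = 1 := by
      rw [← pow_add]; exact Even.neg_one_pow ⟨sdot a b, rfl⟩
    rw [mul_one, mul_one, star_mul', hstar]
    have hreal : star ((-1 : ℂ) ^ sdot (v + a) b) = (-1 : ℂ) ^ sdot (v + a) b := by
      rw [star_pow, star_neg, star_one]
    rw [hreal, hsu]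
    linear_combination (Complex.I ^ sdot a b * (-1:ℂ) ^ sdot v b) * hsq
  · rw [if_neg h, if_neg (fun hh => h ((eq_add_comm_iff v u a).mp hh))]
    simp

lemma PauliE_entry (a b : Fin n → ZMod 2) (v : Fin n → ZMod 2) :
    PauliE a b (v + a) v = Complex.I ^ sdot a b * (-1 : ℂ) ^ sdot v b := by
  rw [PauliE_apply, if_pos rfl, mul_one]

lemma sdot_zero_left (b : Fin n → ZMod 2) : sdot 0 b = 0 := by
  unfold sdot; simp [ZMod.val_zero]

lemma sdot_single (i : Fin n) (b : Fin n → ZMod 2) :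
    sdot (Pi.single i 1) b = (b i).val := by
  unfold sdot
  rw [Finset.sum_eq_single i]
  · simp [ZMod.val_one]
  · intro j _ hj; simp [Pi.single_apply, hj]
  · simp

lemma PauliE_uniq {a b c d : Fin n → ZMod 2} {α β : ℂ} (hα : α ≠ 0)
    (h : α • PauliE a b = β • PauliE c d) : a = c ∧ b = d ∧ α = β := by
  have hIab : Complex.I ^ sdot a b ≠ 0 := pow_ne_zero _ Complex.I_ne_zero
  have key : ∀ v : Fin n → ZMod 2,
      α * (Complex.I ^ sdot a b * (-1 : ℂ) ^ sdot v b) = β * PauliE c d (v + a) v := by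
    intro v
    have := congrFun (congrFun h (v + a)) v
    simpa [Matrix.smul_apply, smul_eq_mul, PauliE_entry] using this
  have hac : a = c := by
    by_contra hne
    have h0 := key 0
    rw [PauliE_apply, if_neg (by simpa [zero_add] using hne), mul_zero, mul_zero] at h0
    simp [sdot_zero_left, hα, hIab] at h0
  subst hac
  have hbase : α * Complex.I ^ sdot a b = β * Complex.I ^ sdot a d := by
    have h0 := key 0
    rw [PauliE_entry] at h0
    simpa [sdot_zero_left] using h0
  have hbd : b = d := by
    funext i
    have hi := key (Pi.single i 1)
    rw [PauliE_entry] at hi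
    simp only [sdot_single] at hi
    have h2 : α * Complex.I ^ sdot a b * (-1:ℂ) ^ (b i).val
        = α * Complex.I ^ sdot a b * (-1:ℂ) ^ (d i).val := by
      linear_combination hi - ((-1:ℂ) ^ (d i).val) * hbase
    have h3 : ((-1:ℂ)) ^ (b i).val = (-1:ℂ) ^ (d i).val :=
      mul_left_cancel₀ (mul_ne_zero hα hIab) h2
    have hb2 := ZMod.val_lt (b i)
    have hd2 := ZMod.val_lt (d i)
    have hval : (b i).val = (d i).val := by
      rcases (by omega : (b i).val = 0 ∨ (b i).val = 1) with hb | hb <;>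
        rcases (by omega : (d i).val = 0 ∨ (d i).val = 1) with hd | hd <;>
        rw [hb, hd] at h3 ⊢ <;> first | rfl | norm_num at h3
    have := congrArg (Nat.cast : ℕ → ZMod 2) hval
    simpa [ZMod.natCast_val, ZMod.cast_id] using this
  subst hbd
  exact ⟨rfl, rfl, mul_right_cancel₀ hIab hbase⟩


lemma smul_PauliE_inj {a b : Fin n → ZMod 2} {α β : ℂ}
    (h : α • PauliE a b = β • PauliE a b) : α = β := by
  have hIab : Complex.I ^ sdot a b ≠ 0 := pow_ne_zero _ Complex.I_ne_zero
  have h0 := congrFun (congrFun h (0 + a)) 0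
  simp only [Matrix.smul_apply, smul_eq_mul, PauliE_entry, sdot_zero_left, pow_zero,
    mul_one] at h0
  exact mul_right_cancel₀ hIab h0

lemma neg_one_pow_cast_eq {s t : ℕ} (h : (-1 : ℂ) ^ s = (-1 : ℂ) ^ t) :
    ((s : ZMod 2) = (t : ZMod 2)) := by
  rw [neg_one_pow_eq_pow_mod_two] at h
  rw [neg_one_pow_eq_pow_mod_two (n := t)] at h
  have hs := Nat.mod_lt s (show 0 < 2 by norm_num)
  have ht := Nat.mod_lt t (show 0 < 2 by norm_num)
  have : s % 2 = t % 2 := by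
    rcases (by omega : s % 2 = 0 ∨ s % 2 = 1) with h1 | h1 <;>
      rcases (by omega : t % 2 = 0 ∨ t % 2 = 1) with h2 | h2 <;>
      rw [h1, h2] at h <;> first | omega | norm_num at h
  calc ((s : ZMod 2)) = ((s % 2 : ℕ) : ZMod 2) := by rw [ZMod.natCast_mod]
    _ = ((t % 2 : ℕ) : ZMod 2) := by rw [this]
    _ = (t : ZMod 2) := by rw [ZMod.natCast_mod]

lemma sdot_cast (a b : Fin n → ZMod 2) :
    ((sdot a b : ℕ) : ZMod 2) = ∑ i, a i * b i := by
  unfold sdot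
  push_cast
  refine Finset.sum_congr rfl fun i _ => ?_
  rw [ZMod.natCast_val, ZMod.natCast_val, ZMod.cast_id, ZMod.cast_id]

end CliffordAux


open CliffordAux

/-- Every Clifford group element `g` (a unitary normalizing the Heisenberg-Weyl
group `HW_N = {i^κ E(a,b)}`) induces a binary symplectic matrix `F` such that
`g E(a,b) g† = ± E([a,b]F)` for all `a, b ∈ F₂ⁿ`. -/
theorem clifford_induces_symplectic (n : ℕ) (hn : 1 ≤ n)
    (g : Matrix (Fin n → ZMod 2) (Fin n → ZMod 2) ℂ)
    (hg : g ∈ unitary (Matrix (Fin n → ZMod 2) (Fin n → ZMod 2) ℂ))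
    (hcliff : ∀ (κ : Fin 4) (a b : Fin n → ZMod 2),
      ∃ (κ' : Fin 4) (a' b' : Fin n → ZMod 2),
        g * (Complex.I ^ (κ : ℕ) • PauliE a b) * gᴴ =
          Complex.I ^ (κ' : ℕ) • PauliE a' b') :
    ∃ F : Matrix (Fin n ⊕ Fin n) (Fin n ⊕ Fin n) (ZMod 2),
      F * OmegaMat n * Fᵀ = OmegaMat n ∧
      ∀ a b : Fin n → ZMod 2, ∃ ε : ℂ, (ε = 1 ∨ ε = -1) ∧
        g * PauliE a b * gᴴ =
          ε • PauliE (fun i => Matrix.vecMul (Sum.elim a b) F (Sum.inl i))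
            (fun i => Matrix.vecMul (Sum.elim a b) F (Sum.inr i)) := by
  classical
  obtain ⟨hg1, hg2⟩ := Unitary.mem_iff.mp hg
  rw [Matrix.star_eq_conjTranspose] at hg1 hg2
  -- Step 1: conjugation data with sign ±1
  have key : ∀ a b : Fin n → ZMod 2, ∃ (a' b' : Fin n → ZMod 2) (φ : ℂ),
      (φ = 1 ∨ φ = -1) ∧ g * PauliE a b * gᴴ = φ • PauliE a' b' := by
    intro a b
    obtain ⟨κ', a', b', h⟩ := hcliff 0 a b
    rw [show ((0 : Fin 4) : ℕ) = 0 from rfl, pow_zero, one_smul] at h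
    refine ⟨a', b', Complex.I ^ (κ' : ℕ), ?_, h⟩
    have hherm : (Complex.I ^ (κ' : ℕ) • PauliE a' b')ᴴ
        = Complex.I ^ (κ' : ℕ) • PauliE a' b' := by
      rw [← h, Matrix.conjTranspose_mul, Matrix.conjTranspose_mul,
        Matrix.conjTranspose_conjTranspose, PauliE_isHermitian, Matrix.mul_assoc]
    rw [Matrix.conjTranspose_smul, PauliE_isHermitian] at hherm
    have hstar : star (Complex.I ^ (κ' : ℕ)) = Complex.I ^ (κ' : ℕ) :=
      smul_PauliE_inj hherm
    rw [star_pow, Complex.star_def, Complex.conj_I] at hstar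
    clear h hherm hcliff hg hg1 hg2
    obtain ⟨k, hk⟩ := κ'
    interval_cases k
    · exact Or.inl (by norm_num)
    · exact absurd hstar (by norm_num [Complex.ext_iff])
    · exact Or.inr (by norm_num [pow_succ, Complex.I_mul_I])
    · exact absurd hstar (by norm_num [pow_succ, Complex.I_mul_I, Complex.ext_iff])
  choose A B φ hφ hconj using key
  have hφne : ∀ a b, φ a b ≠ 0 := by
    intro a b; rcases hφ a b with h | h <;> rw [h] <;> norm_num
  -- conjugation of a product
  have hconjmul : ∀ M N : Matrix (Fin n → ZMod 2) (Fin n → ZMod 2) ℂ,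
      g * (M * N) * gᴴ = (g * M * gᴴ) * (g * N * gᴴ) := by
    intro M N
    simp only [Matrix.mul_assoc]
    rw [← Matrix.mul_assoc gᴴ g (N * gᴴ), hg1, Matrix.one_mul]
  have hγne : ∀ s1 s2 s3 s4 : ℕ,
      Complex.I ^ s1 * Complex.I ^ s2 * (-1 : ℂ) ^ s3 * (Complex.I ^ s4)⁻¹ ≠ 0 := by
    intro s1 s2 s3 s4
    refine mul_ne_zero (mul_ne_zero (mul_ne_zero (pow_ne_zero _ Complex.I_ne_zero)
      (pow_ne_zero _ Complex.I_ne_zero)) (pow_ne_zero _ (by norm_num)))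
      (inv_ne_zero (pow_ne_zero _ Complex.I_ne_zero))
  -- two evaluations of g (E1 E2) g†
  have heval1 : ∀ a b c d : Fin n → ZMod 2,
      g * (PauliE a b * PauliE c d) * gᴴ =
        (φ a b * φ c d * (Complex.I ^ sdot (A a b) (B a b) * Complex.I ^ sdot (A c d) (B c d) *
          (-1 : ℂ) ^ sdot (A c d) (B a b) *
          (Complex.I ^ sdot (A a b + A c d) (B a b + B c d))⁻¹)) •
          PauliE (A a b + A c d) (B a b + B c d) := by
    intro a b c d
    rw [hconjmul, hconj a b, hconj c d, Matrix.smul_mul, Matrix.mul_smul, smul_smul,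
      PauliE_mul, smul_smul, mul_assoc]
  have heval2 : ∀ a b c d : Fin n → ZMod 2,
      g * (PauliE a b * PauliE c d) * gᴴ =
        ((Complex.I ^ sdot a b * Complex.I ^ sdot c d * (-1 : ℂ) ^ sdot c b *
          (Complex.I ^ sdot (a + c) (b + d))⁻¹) * φ (a + c) (b + d)) •
          PauliE (A (a + c) (b + d)) (B (a + c) (b + d)) := by
    intro a b c d
    rw [PauliE_mul, Matrix.mul_smul, Matrix.smul_mul, hconj (a + c) (b + d), smul_smul]
  -- additivity
  have hadd : ∀ a b c d : Fin n → ZMod 2,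
      A (a + c) (b + d) = A a b + A c d ∧ B (a + c) (b + d) = B a b + B c d := by
    intro a b c d
    have h := (heval1 a b c d).symm.trans (heval2 a b c d)
    have hne : φ a b * φ c d * (Complex.I ^ sdot (A a b) (B a b) *
        Complex.I ^ sdot (A c d) (B c d) * (-1 : ℂ) ^ sdot (A c d) (B a b) *
        (Complex.I ^ sdot (A a b + A c d) (B a b + B c d))⁻¹) ≠ 0 :=
      mul_ne_zero (mul_ne_zero (hφne a b) (hφne c d)) (hγne _ _ _ _)
    obtain ⟨h1, h2, _⟩ := PauliE_uniq hne h
    exact ⟨h1.symm, h2.symm⟩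
  -- symplectic invariance
  have hsign : ∀ a b c d : Fin n → ZMod 2,
      ((sdot c b + sdot a d : ℕ) : ZMod 2) =
        ((sdot (A a b) (B c d) + sdot (A c d) (B a b) : ℕ) : ZMod 2) := by
    intro a b c d
    have h1 : g * (PauliE a b * PauliE c d) * gᴴ =
        ((-1 : ℂ) ^ (sdot c b + sdot a d)) • (g * (PauliE c d * PauliE a b) * gᴴ) := by
      rw [PauliE_comm a b c d, Matrix.mul_smul, Matrix.smul_mul]
    rw [heval1 a b c d, heval1 c d a b, add_comm (A c d) (A a b),
      add_comm (B c d) (B a b), smul_smul] at h1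
    have h2 := smul_PauliE_inj h1
    have hK : φ a b * φ c d * (Complex.I ^ sdot (A a b) (B a b) *
        Complex.I ^ sdot (A c d) (B c d) *
        (Complex.I ^ sdot (A a b + A c d) (B a b + B c d))⁻¹) ≠ 0 :=
      mul_ne_zero (mul_ne_zero (hφne a b) (hφne c d))
        (mul_ne_zero (mul_ne_zero (pow_ne_zero _ Complex.I_ne_zero)
          (pow_ne_zero _ Complex.I_ne_zero))
          (inv_ne_zero (pow_ne_zero _ Complex.I_ne_zero)))
    have h3 : (φ a b * φ c d * (Complex.I ^ sdot (A a b) (B a b) *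
          Complex.I ^ sdot (A c d) (B c d) *
          (Complex.I ^ sdot (A a b + A c d) (B a b + B c d))⁻¹)) *
          ((-1 : ℂ) ^ sdot (A c d) (B a b)) =
        (φ a b * φ c d * (Complex.I ^ sdot (A a b) (B a b) *
          Complex.I ^ sdot (A c d) (B c d) *
          (Complex.I ^ sdot (A a b + A c d) (B a b + B c d))⁻¹)) *
          ((-1 : ℂ) ^ (sdot c b + sdot a d) * (-1 : ℂ) ^ sdot (A a b) (B c d)) := by
      linear_combination h2
    have hPQ := mul_left_cancel₀ hK h3
    have hQ2 : (-1 : ℂ) ^ sdot (A a b) (B c d) * (-1 : ℂ) ^ sdot (A a b) (B c d) = 1 := by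
      rw [← pow_add]; exact Even.neg_one_pow ⟨_, rfl⟩
    apply neg_one_pow_cast_eq
    rw [pow_add ((-1 : ℂ)) (sdot (A a b) (B c d))]
    linear_combination (-((-1 : ℂ) ^ sdot (A a b) (B c d))) * hPQ -
      ((-1 : ℂ) ^ (sdot c b + sdot a d)) * hQ2
  -- zero values
  have hA0 : A 0 0 = 0 ∧ B 0 0 = 0 := by
    obtain ⟨h1, h2⟩ := hadd 0 0 0 0
    rw [add_zero (0 : Fin n → ZMod 2)] at h1 h2
    constructor
    · exact (add_left_cancel (a := A 0 0) (by rw [add_zero]; exact h1)).symm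
    · exact (add_left_cancel (a := B 0 0) (by rw [add_zero]; exact h2)).symm
  -- the linear map
  set T : ((Fin n ⊕ Fin n) → ZMod 2) → ((Fin n ⊕ Fin n) → ZMod 2) := fun x =>
    Sum.elim (A (fun i => x (Sum.inl i)) (fun i => x (Sum.inr i)))
      (B (fun i => x (Sum.inl i)) (fun i => x (Sum.inr i))) with hT
  have hTadd : ∀ x y : (Fin n ⊕ Fin n) → ZMod 2, T (x + y) = T x + T y := by
    intro x y
    funext p
    obtain ⟨h1, h2⟩ := hadd (fun i => x (Sum.inl i)) (fun i => x (Sum.inr i))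
      (fun i => y (Sum.inl i)) (fun i => y (Sum.inr i))
    cases p with
    | inl i => exact congrFun h1 i
    | inr i => exact congrFun h2 i
  have hT0 : T 0 = 0 := by
    funext p
    cases p with
    | inl i => exact congrFun hA0.1 i
    | inr i => exact congrFun hA0.2 i
  have hcases : ∀ c : ZMod 2, c = 0 ∨ c = 1 := by decide
  set L : ((Fin n ⊕ Fin n) → ZMod 2) →ₗ[ZMod 2] ((Fin n ⊕ Fin n) → ZMod 2) :=
    { toFun := T
      map_add' := hTadd
      map_smul' := by
        intro c x
        rcases hcases c with hc | hc <;> subst hc <;> simp [hT0] } with hL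
  set F := (LinearMap.toMatrix' L)ᵀ with hFdef
  have hF : ∀ x : (Fin n ⊕ Fin n) → ZMod 2, Matrix.vecMul x F = T x := by
    intro x
    rw [hFdef, Matrix.vecMul_transpose]
    calc LinearMap.toMatrix' L *ᵥ x = Matrix.toLin' (LinearMap.toMatrix' L) x := by
          rw [Matrix.toLin'_apply]
      _ = L x := by rw [Matrix.toLin'_toMatrix']
      _ = T x := rfl
  have hFrow : ∀ j : Fin n ⊕ Fin n, (fun p => F j p)
      = T (fun k => if k = j then 1 else 0) := by
    intro j
    funext p
    rw [hFdef, Matrix.transpose_apply, LinearMap.toMatrix'_apply]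
    show T (Pi.single j 1) p = _
    have hps : (Pi.single j 1 : (Fin n ⊕ Fin n) → ZMod 2) = fun k => if k = j then 1 else 0 := by
      funext k
      simp [Pi.single_apply]
    rw [hps]
  -- the bilinear form
  set bil : ((Fin n ⊕ Fin n) → ZMod 2) → ((Fin n ⊕ Fin n) → ZMod 2) → ZMod 2 :=
    fun x y => ∑ q, (∑ p, x p * OmegaMat n p q) * y q with hbil
  have hbil_eq : ∀ x y : (Fin n ⊕ Fin n) → ZMod 2, bil x y =
      ∑ i, x (Sum.inr i) * y (Sum.inl i) + ∑ i, x (Sum.inl i) * y (Sum.inr i) := by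
    intro x y
    rw [hbil]
    simp only [Fintype.sum_sum_type, OmegaMat, Matrix.fromBlocks_apply₁₁,
      Matrix.fromBlocks_apply₁₂, Matrix.fromBlocks_apply₂₁, Matrix.fromBlocks_apply₂₂,
      Matrix.zero_apply, Matrix.one_apply, mul_zero, mul_ite, mul_one,
      Finset.sum_const_zero, add_zero, zero_add, Finset.sum_ite_eq, Finset.mem_univ,
      if_true]
    simp [Finset.sum_ite_eq']
  have hbil_inv : ∀ x y : (Fin n ⊕ Fin n) → ZMod 2, bil (T x) (T y) = bil x y := by
    intro x y
    rw [hbil_eq, hbil_eq]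
    have hs := hsign (fun i => x (Sum.inl i)) (fun i => x (Sum.inr i))
      (fun i => y (Sum.inl i)) (fun i => y (Sum.inr i))
    push_cast at hs
    rw [sdot_cast, sdot_cast, sdot_cast, sdot_cast] at hs
    show (∑ i, B (fun i => x (Sum.inl i)) (fun i => x (Sum.inr i)) i *
        A (fun i => y (Sum.inl i)) (fun i => y (Sum.inr i)) i) +
      ∑ i, A (fun i => x (Sum.inl i)) (fun i => x (Sum.inr i)) i *
        B (fun i => y (Sum.inl i)) (fun i => y (Sum.inr i)) i =
      (∑ i, x (Sum.inr i) * y (Sum.inl i)) + ∑ i, x (Sum.inl i) * y (Sum.inr i)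
    have e1 : (∑ i, B (fun i => x (Sum.inl i)) (fun i => x (Sum.inr i)) i *
        A (fun i => y (Sum.inl i)) (fun i => y (Sum.inr i)) i) =
        ∑ i, A (fun i => y (Sum.inl i)) (fun i => y (Sum.inr i)) i *
          B (fun i => x (Sum.inl i)) (fun i => x (Sum.inr i)) i :=
      Finset.sum_congr rfl fun i _ => mul_comm _ _
    have e2 : (∑ i, x (Sum.inr i) * y (Sum.inl i)) =
        ∑ i, y (Sum.inl i) * x (Sum.inr i) :=
      Finset.sum_congr rfl fun i _ => mul_comm _ _
    rw [e1, e2, hs]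
    exact add_comm _ _
  -- assemble
  refine ⟨F, ?_, ?_⟩
  · ext j k
    have hentry : (F * OmegaMat n * Fᵀ) j k = bil (fun p => F j p) (fun p => F k p) := by
      rw [hbil]
      simp only [Matrix.mul_apply, Matrix.transpose_apply]
    rw [hentry, hFrow j, hFrow k]
    rw [hbil_inv (fun p => if p = j then (1 : ZMod 2) else 0)
      (fun p => if p = k then (1 : ZMod 2) else 0), hbil_eq]
    cases j with
    | inl j' =>
      cases k with
      | inl k' => simp [OmegaMat]
      | inr k' => simp [OmegaMat, Matrix.one_apply, Finset.sum_ite_eq, eq_comm]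
    | inr j' =>
      cases k with
      | inl k' => simp [OmegaMat, Matrix.one_apply, Finset.sum_ite_eq, eq_comm]
      | inr k' => simp [OmegaMat]
  · intro a b
    refine ⟨φ a b, hφ a b, ?_⟩
    have h1 : (fun i => Matrix.vecMul (Sum.elim a b) F (Sum.inl i)) = A a b := by
      funext i
      rw [congrFun (hF (Sum.elim a b)) (Sum.inl i)]
      rfl
    have h2 : (fun i => Matrix.vecMul (Sum.elim a b) F (Sum.inr i)) = B a b := by
      funext i
      rw [congrFun (hF (Sum.elim a b)) (Sum.inr i)]
      rfl
    rw [h1, h2]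
    exact hconj a b


end
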